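/- Let $\mu$ and $\pi$ be probability measures on a measurable space $A$ such that $\pi \ll \mu$ and $\mu \ll \pi$ with bounded log-density $f = \log\frac{d\pi}{d\mu}$. Then $\operatorname{KL}(\pi\,|\,\mu) \le 2\,\big\| f - \int_A f\, d\mu \big\|_\infty$, where $\operatorname{KL}(\pi|\mu) = \int_A \log\frac{d\pi}{d\mu}\, d\pi$. -/
import Mathlib

open MeasureTheory

theorem stmt_1 {A : Type*} [MeasurableSpace A]
    (μ π : Measure A) [IsProbabilityMeasure μ] [IsProbabilityMeasure π]
    (hπμ : π ≪ μ) (hμπ : μ ≪ π)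
    (f : A → ℝ) (hf : Measurable f) (M : ℝ) (hfb : ∀ a, |f a| ≤ M)
    (hdens : ∀ᵐ a ∂μ, (π.rnDeriv μ a).toReal = Real.exp (f a))
    (C : ℝ) (hC : ∀ a, |f a - ∫ x, f x ∂μ| ≤ C) :
    ∫ a, f a ∂π ≤ 2 * C := by
  set m : ℝ := ∫ x, f x ∂μ with hm
  have hfiμ : Integrable f μ :=
    ⟨hf.aestronglyMeasurable, HasFiniteIntegral.of_bounded (C := M) (.of_forall hfb)⟩
  have hfiπ : Integrable f π :=
    ⟨hf.aestronglyMeasurable, HasFiniteIntegral.of_bounded (C := M) (.of_forall hfb)⟩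
  -- exp is bounded on the image of f
  have hexpb : ∀ a, ‖Real.exp (f a)‖ ≤ Real.exp M := by
    intro a
    rw [Real.norm_eq_abs, abs_of_pos (Real.exp_pos _)]
    exact Real.exp_le_exp.mpr ((abs_le.mp (hfb a)).2)
  have hexpi : Integrable (fun a => Real.exp (f a)) μ :=
    ⟨(Real.continuous_exp.measurable.comp hf).aestronglyMeasurable,
      HasFiniteIntegral.of_bounded (C := Real.exp M) (.of_forall hexpb)⟩
  -- Jensen: exp m ≤ ∫ exp (f a) dμ
  have hjensen : Real.exp m ≤ ∫ a, Real.exp (f a) ∂μ :=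
    convexOn_exp.map_integral_le Real.continuous_exp.continuousOn isClosed_univ
      (.of_forall fun _ => trivial) hfiμ hexpi
  -- ∫ exp (f a) dμ = 1
  have hint1 : ∫ a, Real.exp (f a) ∂μ = 1 := by
    rw [← integral_congr_ae hdens, Measure.integral_toReal_rnDeriv hπμ]
    simp
  have hm0 : m ≤ 0 := by
    have := hjensen
    rw [hint1] at this
    have := Real.exp_le_exp.mp (by simpa using this : Real.exp m ≤ Real.exp 0)
    simpa using this
  haveI : Nonempty A := Measure.nonempty_of_neZero μ
  have hC0 : 0 ≤ C := le_trans (abs_nonneg _) (hC Classical.ofNonempty)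
  -- ∫ f dπ = ∫ (f - m) dπ + m ≤ C + m ≤ C + C
  have h1 : ∫ a, f a ∂π - m = ∫ a, (f a - m) ∂π := by
    rw [integral_sub hfiπ (integrable_const m), integral_const]
    simp
  have h2 : ∫ a, (f a - m) ∂π ≤ C := by
    calc ∫ a, (f a - m) ∂π ≤ ∫ a, C ∂π :=
          integral_mono (hfiπ.sub (integrable_const m)) (integrable_const C)
            (fun a => (abs_le.mp (hC a)).2)
      _ = C := by simp
  linarith
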